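/- Let X̂ be the set of all norms on ℝⁿ with the Goldman–Iwahori metric d(η,η') = sup_{v≠0}|log(η(v)/η'(v))|. Then the family of closed balls in X̂ satisfies the Helly property. -/
import Mathlib

def IsNorm (𝕂 : Type*) [NormedField 𝕂] {V : Type*} [AddCommGroup V] [Module 𝕂 V]
    (η : V → ℝ) : Prop :=
  (∀ v, 0 ≤ η v) ∧ (∀ v, η v = 0 ↔ v = 0) ∧
    (∀ (α : 𝕂) (v : V), η (α • v) = ‖α‖ * η v) ∧ ∀ u v, η (u + v) ≤ η u + η v

noncomputable def GIdist {V : Type*} [Zero V] (η η' : V → ℝ) : ℝ :=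
  ⨆ v : {v : V // v ≠ 0}, |Real.log (η v.1 / η' v.1)|

/-- Type synonym for `Fin n → ℝ` to carry a custom norm. -/
def NormSyn (n : ℕ) : Type := Fin n → ℝ

noncomputable instance (n : ℕ) : AddCommGroup (NormSyn n) := Pi.addCommGroup
noncomputable instance (n : ℕ) : Module ℝ (NormSyn n) := Pi.module _ _ _

/-- Package an `IsNorm` as an `AddGroupNorm`. -/
def IsNorm.toAddGroupNorm {V : Type*} [AddCommGroup V] [Module ℝ V]
    {η : V → ℝ} (h : IsNorm ℝ η) : AddGroupNorm V where
  toFun := η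
  map_zero' := (h.2.1 0).2 rfl
  add_le' := h.2.2.2
  neg' := fun v => by
    have := h.2.2.1 (-1 : ℝ) v
    simpa using this
  eq_zero_of_map_eq_zero' := fun v hv => (h.2.1 v).1 hv

lemma IsNorm.pos {V : Type*} [AddCommGroup V] [Module ℝ V] {η : V → ℝ}
    (h : IsNorm ℝ η) {v : V} (hv : v ≠ 0) : 0 < η v :=
  lt_of_le_of_ne (h.1 v) fun e => hv ((h.2.1 v).1 e.symm)

/-- A custom norm is dominated by a multiple of the standard norm. -/
lemma IsNorm.le_std {n : ℕ} {η : (Fin n → ℝ) → ℝ} (hη : IsNorm ℝ η) :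
    ∃ C : ℝ, 0 < C ∧ ∀ v : Fin n → ℝ, η v ≤ C * ‖v‖ := by
  letI : NormedAddCommGroup (NormSyn n) := AddGroupNorm.toNormedAddCommGroup hη.toAddGroupNorm
  letI : NormedSpace ℝ (NormSyn n) := ⟨fun a v => le_of_eq (hη.2.2.1 a v)⟩
  letI : FiniteDimensional ℝ (Fin n → ℝ) := inferInstance
  let f : (Fin n → ℝ) →ₗ[ℝ] NormSyn n :=
    { toFun := fun v => v, map_add' := fun _ _ => rfl, map_smul' := fun _ _ => rfl }
  obtain ⟨C, hC, hb⟩ := (LinearMap.toContinuousLinearMap f).bound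
  exact ⟨C, hC, fun v => hb v⟩

/-- The standard norm is dominated by a multiple of a custom norm. -/
lemma IsNorm.std_le {n : ℕ} {η : (Fin n → ℝ) → ℝ} (hη : IsNorm ℝ η) :
    ∃ C : ℝ, 0 < C ∧ ∀ v : Fin n → ℝ, ‖v‖ ≤ C * η v := by
  letI : NormedAddCommGroup (NormSyn n) := AddGroupNorm.toNormedAddCommGroup hη.toAddGroupNorm
  letI : NormedSpace ℝ (NormSyn n) := ⟨fun a v => le_of_eq (hη.2.2.1 a v)⟩
  letI : FiniteDimensional ℝ (NormSyn n) :=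
    inferInstanceAs (FiniteDimensional ℝ (Fin n → ℝ))
  let f : NormSyn n →ₗ[ℝ] (Fin n → ℝ) :=
    { toFun := fun v => v, map_add' := fun _ _ => rfl, map_smul' := fun _ _ => rfl }
  obtain ⟨C, hC, hb⟩ := (LinearMap.toContinuousLinearMap f).bound
  exact ⟨C, hC, fun v => hb v⟩

/-- Any two custom norms on `Fin n → ℝ` are comparable. -/
lemma IsNorm.exists_bound {n : ℕ} {η η' : (Fin n → ℝ) → ℝ}
    (hη : IsNorm ℝ η) (hη' : IsNorm ℝ η') :
    ∃ C : ℝ, 0 < C ∧ ∀ v, η v ≤ C * η' v := by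
  obtain ⟨C, hC, h1⟩ := hη.le_std
  obtain ⟨D, hD, h2⟩ := hη'.std_le
  refine ⟨C * D, by positivity, fun v => ?_⟩
  calc η v ≤ C * ‖v‖ := h1 v
    _ ≤ C * (D * η' v) := by
        have := h2 v
        nlinarith
    _ = C * D * η' v := by ring

lemma abs_log_div_le_iff {a b r : ℝ} (ha : 0 < a) (hb : 0 < b) :
    |Real.log (a / b)| ≤ r ↔ a ≤ Real.exp r * b ∧ b ≤ Real.exp r * a := by
  have key : ∀ x y : ℝ, 0 < x → 0 < y →
      (Real.log x - Real.log y ≤ r ↔ x ≤ Real.exp r * y) := by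
    intro x y hx hy
    rw [← Real.log_le_log_iff hx (by positivity),
      Real.log_mul (Real.exp_pos r).ne' hy.ne', Real.log_exp, sub_le_iff_le_add]
  rw [abs_le, Real.log_div ha.ne' hb.ne']
  constructor
  · rintro ⟨h1, h2⟩
    refine ⟨(key a b ha hb).1 h2, (key b a hb ha).1 ?_⟩
    linarith
  · rintro ⟨h1, h2⟩
    have := (key a b ha hb).2 h1
    have := (key b a hb ha).2 h2
    constructor <;> linarith

lemma bddAbove_logratio {n : ℕ} {η η' : (Fin n → ℝ) → ℝ}
    (hη : IsNorm ℝ η) (hη' : IsNorm ℝ η') :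
    BddAbove (Set.range fun v : {v : Fin n → ℝ // v ≠ 0} =>
      |Real.log (η v.1 / η' v.1)|) := by
  obtain ⟨C, hC, h1⟩ := hη.exists_bound hη'
  obtain ⟨D, hD, h2⟩ := hη'.exists_bound hη
  refine ⟨Real.log (max C D), ?_⟩
  rintro x ⟨⟨v, hv⟩, rfl⟩
  have hηv := hη.pos hv
  have hη'v := hη'.pos hv
  have hmax : 0 < max C D := lt_max_of_lt_left hC
  rw [abs_le, Real.log_div hηv.ne' hη'v.ne']
  constructor
  · have : Real.log (η' v) - Real.log (η v) ≤ Real.log (max C D) := by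
      have h : η' v ≤ max C D * η v :=
        le_trans (h2 v) (by nlinarith [le_max_right C D, hη.1 v])
      rw [sub_le_iff_le_add, ← Real.log_exp (Real.log (max C D) + Real.log (η v))]
      apply Real.log_le_log hη'v
      rw [Real.exp_add, Real.exp_log hmax, Real.exp_log hηv]
      exact h
    linarith
  · have h : η v ≤ max C D * η' v :=
      le_trans (h1 v) (by nlinarith [le_max_left C D, hη'.1 v])
    rw [sub_le_iff_le_add, ← Real.log_exp (Real.log (max C D) + Real.log (η' v))]
    apply Real.log_le_log hηv
    rw [Real.exp_add, Real.exp_log hmax, Real.exp_log hη'v]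
    exact h

/-- Pointwise bound from a `GIdist` bound. -/
lemma GIdist_pointwise {n : ℕ} {η η' : (Fin n → ℝ) → ℝ}
    (hη : IsNorm ℝ η) (hη' : IsNorm ℝ η') {r : ℝ} (h : GIdist η η' ≤ r)
    {v : Fin n → ℝ} (hv : v ≠ 0) :
    η v ≤ Real.exp r * η' v ∧ η' v ≤ Real.exp r * η v := by
  have hb := bddAbove_logratio hη hη'
  have hle : |Real.log (η v / η' v)| ≤ r :=
    le_trans (le_ciSup hb ⟨v, hv⟩) h
  exact (abs_log_div_le_iff (hη.pos hv) (hη'.pos hv)).1 hle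

theorem norms_helly {n : ℕ} {ι : Type*}
    (c : ι → (Fin n → ℝ) → ℝ) (hc : ∀ i, IsNorm ℝ (c i))
    (r : ι → ℝ) (hr : ∀ i, 0 ≤ r i)
    (hpair : ∀ i j, ∃ θ, IsNorm ℝ θ ∧ GIdist (c i) θ ≤ r i ∧ GIdist (c j) θ ≤ r j) :
    ∃ θ, IsNorm ℝ θ ∧ ∀ i, GIdist (c i) θ ≤ r i := by
  rcases isEmpty_or_nonempty ι with hι | hι
  · exact ⟨fun v => ‖v‖, ⟨fun v => norm_nonneg v, fun v => norm_eq_zero,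
      fun a v => norm_smul a v, fun u v => norm_add_le u v⟩, fun i => isEmptyElim i⟩
  -- key cross inequality
  have key : ∀ i j (v : Fin n → ℝ), Real.exp (-(r i)) * c i v ≤ Real.exp (r j) * c j v := by
    intro i j v
    rcases eq_or_ne v 0 with rfl | hv
    · simp [((hc i).2.1 0).2 rfl, ((hc j).2.1 0).2 rfl]
    obtain ⟨θ, hθ, hi, hj⟩ := hpair i j
    obtain ⟨hi1, _⟩ := GIdist_pointwise (hc i) hθ hi hv
    obtain ⟨_, hj2⟩ := GIdist_pointwise (hc j) hθ hj hv
    have hone : Real.exp (-(r i)) * Real.exp (r i) = 1 := by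
      rw [← Real.exp_add]; simp
    have e1 : Real.exp (-(r i)) * c i v ≤ θ v := by
      calc Real.exp (-(r i)) * c i v ≤ Real.exp (-(r i)) * (Real.exp (r i) * θ v) :=
            mul_le_mul_of_nonneg_left hi1 (Real.exp_pos _).le
        _ = θ v := by rw [← mul_assoc, hone, one_mul]
    exact e1.trans hj2
  have i₀ : ι := Classical.arbitrary ι
  set θ : (Fin n → ℝ) → ℝ := fun v => ⨆ i, Real.exp (-(r i)) * c i v with hθdef
  have hbdd : ∀ v, BddAbove (Set.range fun i => Real.exp (-(r i)) * c i v) := fun v =>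
    ⟨Real.exp (r i₀) * c i₀ v, by rintro x ⟨i, rfl⟩; exact key i i₀ v⟩
  have hle : ∀ j v, θ v ≤ Real.exp (r j) * c j v := fun j v =>
    ciSup_le fun i => key i j v
  have hge : ∀ j v, Real.exp (-(r j)) * c j v ≤ θ v := fun j v =>
    le_ciSup (hbdd v) j
  have hnonneg : ∀ v, 0 ≤ θ v := fun v =>
    Real.iSup_nonneg fun i => mul_nonneg (Real.exp_pos _).le ((hc i).1 v)
  have hpos : ∀ v : Fin n → ℝ, v ≠ 0 → 0 < θ v := fun v hv =>
    lt_of_lt_of_le (mul_pos (Real.exp_pos _) ((hc i₀).pos hv)) (hge i₀ v)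
  have h0 : ∀ i, c i (0 : Fin n → ℝ) = 0 := fun i => ((hc i).2.1 0).2 rfl
  have hθnorm : IsNorm ℝ θ := by
    refine ⟨hnonneg, fun v => ⟨fun h => ?_, fun h => ?_⟩, fun α v => ?_, fun u v => ?_⟩
    · by_contra hv
      exact (hpos v hv).ne' h
    · subst h
      simp only [hθdef, h0, mul_zero]
      exact ciSup_const
    · have hc' : ∀ i, Real.exp (-(r i)) * c i (α • v)
          = ‖α‖ * (Real.exp (-(r i)) * c i v) := fun i => by
        rw [(hc i).2.2.1]; ring
      simp only [hθdef, hc']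
      rw [← Real.mul_iSup_of_nonneg (norm_nonneg α)]
    · refine ciSup_le fun i => ?_
      calc Real.exp (-(r i)) * c i (u + v)
          ≤ Real.exp (-(r i)) * (c i u + c i v) :=
            mul_le_mul_of_nonneg_left ((hc i).2.2.2 u v) (Real.exp_pos _).le
        _ = Real.exp (-(r i)) * c i u + Real.exp (-(r i)) * c i v := by ring
        _ ≤ θ u + θ v := add_le_add (le_ciSup (hbdd u) i) (le_ciSup (hbdd v) i)
  refine ⟨θ, hθnorm, fun j => ?_⟩
  refine Real.iSup_le (fun v => ?_) (hr j)
  obtain ⟨v, hv⟩ := v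
  have hone : Real.exp (-(r j)) * Real.exp (r j) = 1 := by
    rw [← Real.exp_add]; simp
  refine (abs_log_div_le_iff ((hc j).pos hv) (hpos v hv)).2 ⟨?_, hle j v⟩
  have := mul_le_mul_of_nonneg_left (hge j v) (Real.exp_pos (r j)).le
  calc c j v = Real.exp (r j) * (Real.exp (-(r j)) * c j v) := by
        rw [← mul_assoc, mul_comm (Real.exp (r j)), hone, one_mul]
    _ ≤ Real.exp (r j) * θ v := this
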